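/- Let T be a Noetherian regular ring of prime characteristic p, let e ≥ 1, and assume T^{1/p^e} is a ∩-flat T-module. If A = A_1 + ⋯ + A_s is a sum of ideals of T, then Ã^(e) = Ã_1^(e) + ⋯ + Ã_s^(e). -/

import Mathlib

open IsLocalRing

/-- The `q`-th Frobenius power of an ideal: the ideal generated by `q`-th powers of elements. -/
def Ideal.frobPow {R : Type*} [CommSemiring R] (q : ℕ) (I : Ideal R) : Ideal R :=
  Ideal.span ((fun a => a ^ q) '' (I : Set R))

/-- Regularity for a local ring: the maximal ideal is generated by `dim R` elements. -/
def IsRegularLocal (R : Type*) [CommRing R] [IsLocalRing R] : Prop :=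
  ∃ (n : ℕ) (x : Fin n → R), maximalIdeal R = Ideal.span (Set.range x) ∧
    ringKrullDim R = n

/-- A regular (commutative Noetherian) ring: every localization at a prime is regular local. -/
def IsRegularRing' (T : Type*) [CommRing T] : Prop :=
  ∀ (P : Ideal T) [P.IsPrime], IsRegularLocal (Localization.AtPrime P)

/-- `T^{1/p^e}`: the ring `T` viewed as a module over itself by restriction of scalars
along the `e`-th iterate of the Frobenius endomorphism (`t • x = t^{p^e} * x`). -/
def FrobTwist (T : Type*) (p e : ℕ) : Type _ := T

instance FrobTwist.instAddCommGroup {T : Type*} [CommRing T] {p e : ℕ} :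
    AddCommGroup (FrobTwist T p e) :=
  inferInstanceAs (AddCommGroup T)

instance FrobTwist.instModule {T : Type*} [CommRing T] {p e : ℕ} [ExpChar T p] :
    Module T (FrobTwist T p e) :=
  Module.compHom T (iterateFrobenius T p e)

/-- A `∩`-flat module: flat, and tensoring commutes with arbitrary intersections of
submodules of finitely generated modules. -/
def IsInterFlat (T : Type u) [CommRing T] (M : Type v) [AddCommGroup M] [Module T M] : Prop :=
  Module.Flat T M ∧
    ∀ (N : Type u) [AddCommGroup N] [Module T N], Module.Finite T N →
      ∀ 𝒮 : Set (Submodule T N),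
        LinearMap.range (LinearMap.lTensor M (sInf 𝒮).subtype) =
          ⨅ P ∈ 𝒮, LinearMap.range (LinearMap.lTensor M (Submodule.subtype P))

/-- `Ã^{(e)}`: the intersection of all ideals `L` with `A ⊆ L^{[q]}` (`q = p^e`). -/
def Ideal.tilde {T : Type*} [CommSemiring T] (q : ℕ) (A : Ideal T) : Ideal T :=
  sInf { L : Ideal T | A ≤ Ideal.frobPow q L }


section Aux
variable {T : Type u} [CommRing T] (p e : ℕ) [Fact p.Prime] [CharP T p]

lemma frobTwist_smul (t : T) (x : FrobTwist T p e) :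
    t • x = (t ^ (p ^ e) * show T from x : T) := rfl

/-- The additive subgroup `frobPow q L ⊆ T` viewed as a `T`-submodule of `FrobTwist T p e`. -/
def frobPowSub (L : Ideal T) : Submodule T (FrobTwist T p e) where
  carrier := (Ideal.frobPow (p ^ e) L : Set T)
  add_mem' := by intro a b ha hb; exact add_mem ha hb
  zero_mem' := zero_mem _
  smul_mem' := by
    intro t x hx
    show t • x ∈ (Ideal.frobPow (p ^ e) L : Set T)
    rw [frobTwist_smul]
    exact Ideal.mul_mem_left _ _ hx

lemma mem_frobPowSub (L : Ideal T) (x : T) :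
    (show FrobTwist T p e from x) ∈ frobPowSub p e L ↔ x ∈ Ideal.frobPow (p ^ e) L :=
  Iff.rfl

lemma range_rid_lTensor (L : Ideal T) :
    LinearMap.range ((TensorProduct.rid T (FrobTwist T p e)).toLinearMap ∘ₗ
      LinearMap.lTensor (FrobTwist T p e) (Submodule.subtype L)) = frobPowSub p e L := by
  apply le_antisymm
  · rintro x ⟨z, rfl⟩
    induction z using TensorProduct.induction_on with
    | zero => simp only [map_zero]; exact zero_mem _
    | tmul m l =>
      simp only [LinearMap.coe_comp, Function.comp_apply, LinearMap.lTensor_tmul,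
        Submodule.coe_subtype, LinearEquiv.coe_coe, TensorProduct.rid_tmul]
      rw [frobTwist_smul]
      exact (mem_frobPowSub p e L _).mpr
        (Ideal.mul_mem_right _ _ (Ideal.subset_span ⟨(l : T), l.2, rfl⟩))
    | add a b ha hb => rw [map_add]; exact add_mem ha hb
  · intro x hx
    have hx' := (mem_frobPowSub p e L x).mp hx
    rw [Ideal.frobPow, ← Ideal.submodule_span_eq] at hx'; replace hx' := Submodule.mem_span_set.mp hx'
    obtain ⟨c, hsupp, hsum⟩ := hx'
    rw [← hsum]
    refine Submodule.sum_mem _ ?_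
    intro i hi
    obtain ⟨a, haL, rfl⟩ := hsupp hi
    refine ⟨(c (a ^ (p ^ e)) : FrobTwist T p e) ⊗ₜ[T] (⟨a, haL⟩ : L), ?_⟩
    simp only [LinearMap.coe_comp, Function.comp_apply, LinearMap.lTensor_tmul,
      Submodule.coe_subtype, LinearEquiv.coe_coe, TensorProduct.rid_tmul]
    rw [LinearMap.lTensor_tmul (M := FrobTwist T p e) (Submodule.subtype L) (c (a ^ (p ^ e)) : FrobTwist T p e) ⟨a, haL⟩,
      TensorProduct.rid_tmul (M := FrobTwist T p e) (c (a ^ (p ^ e)) : FrobTwist T p e),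
      frobTwist_smul p e (Submodule.subtype L ⟨a, haL⟩) (c (a ^ (p ^ e)) : FrobTwist T p e)]
    show _ = c (a ^ (p ^ e)) * a ^ (p ^ e)
    ring
    rfl

lemma mem_range_lTensor_iff (L : Ideal T) (x : T) :
    (TensorProduct.rid T (FrobTwist T p e)).symm (show FrobTwist T p e from x) ∈
        LinearMap.range (LinearMap.lTensor (FrobTwist T p e) (Submodule.subtype L)) ↔
      x ∈ Ideal.frobPow (p ^ e) L := by
  rw [← mem_frobPowSub p e L x, ← range_rid_lTensor p e L]
  constructor
  · rintro ⟨z, hz⟩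
    exact ⟨z, by simp [LinearMap.comp_apply, hz]; exact LinearEquiv.apply_symm_apply _ _⟩
  · rintro ⟨z, hz⟩
    refine ⟨z, ?_⟩
    apply_fun (TensorProduct.rid T (FrobTwist T p e)).symm at hz
    simpa [LinearMap.comp_apply] using hz

lemma mem_frobPow_sInf_iff (hflat : IsInterFlat T (FrobTwist T p e))
    (S : Set (Ideal T)) (x : T) :
    x ∈ Ideal.frobPow (p ^ e) (sInf S) ↔ ∀ L ∈ S, x ∈ Ideal.frobPow (p ^ e) L := by
  have h := hflat.2 T inferInstance S
  rw [← mem_range_lTensor_iff p e (sInf S) x, h, Submodule.mem_iInf]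
  refine forall_congr' fun L => ?_
  rw [Submodule.mem_iInf]
  exact forall_congr' fun hL => mem_range_lTensor_iff p e L x

lemma le_frobPow_tilde (hflat : IsInterFlat T (FrobTwist T p e)) (A : Ideal T) :
    A ≤ Ideal.frobPow (p ^ e) (Ideal.tilde (p ^ e) A) := by
  intro a ha
  rw [Ideal.tilde, mem_frobPow_sInf_iff p e hflat]
  exact fun L hL => hL ha

lemma frobPow_mono {q : ℕ} {I J : Ideal T} (h : I ≤ J) :
    Ideal.frobPow q I ≤ Ideal.frobPow q J :=
  Ideal.span_mono (Set.image_mono h)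

lemma tilde_mono {q : ℕ} {I J : Ideal T} (h : I ≤ J) :
    Ideal.tilde q I ≤ Ideal.tilde q J :=
  sInf_le_sInf fun L hL => le_trans h hL

end Aux

lemma ideal_sum_le {T : Type u} [CommRing T] {ι : Type*} (s : Finset ι)
    (f : ι → Ideal T) (C : Ideal T) (h : ∀ i ∈ s, f i ≤ C) : ∑ i ∈ s, f i ≤ C := by
  classical
  induction s using Finset.induction_on with
  | empty => simp
  | insert a s' hni ih =>
    rw [Finset.sum_insert hni, Submodule.add_eq_sup]
    exact sup_le (h a (Finset.mem_insert_self a s'))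
      (ih fun i hi => h i (Finset.mem_insert_of_mem hi))

lemma le_ideal_sum {T : Type u} [CommRing T] {ι : Type*} (s : Finset ι)
    (f : ι → Ideal T) {i : ι} (hi : i ∈ s) : f i ≤ ∑ j ∈ s, f j :=
  Finset.single_le_sum (fun j _ => bot_le) hi

/-- Let `T` be a Noetherian regular ring of prime characteristic `p`,
`e ≥ 1`, with `T^{1/p^e}` a `∩`-flat `T`-module.  If `A = A_1 + ⋯ + A_s` is a sum of
ideals of `T`, then `Ã^{(e)} = Ã_1^{(e)} + ⋯ + Ã_s^{(e)}`. -/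
theorem stmt10 {T : Type u} [CommRing T] [IsNoetherianRing T]
    (p : ℕ) [Fact p.Prime] [CharP T p] (hreg : IsRegularRing' T)
    (e : ℕ) (he : 1 ≤ e) (hflat : IsInterFlat T (FrobTwist T p e))
    (s : ℕ) (hs : 1 ≤ s) (A : Ideal T) (Ai : Fin s → Ideal T) (hA : A = ∑ i, Ai i) :
    Ideal.tilde (p ^ e) A = ∑ i, Ideal.tilde (p ^ e) (Ai i) := by
  subst hA
  apply le_antisymm
  · apply sInf_le
    show (∑ i, Ai i) ≤ Ideal.frobPow (p ^ e) (∑ i, Ideal.tilde (p ^ e) (Ai i))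
    refine ideal_sum_le _ _ _ fun i _ => ?_
    exact le_trans (le_frobPow_tilde p e hflat (Ai i))
      (frobPow_mono (le_ideal_sum Finset.univ (fun j => Ideal.tilde (p ^ e) (Ai j)) (Finset.mem_univ i)))
  · refine ideal_sum_le _ _ _ fun i _ => ?_
    exact tilde_mono (le_ideal_sum Finset.univ Ai (Finset.mem_univ i))
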